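/- Let F ∈ L[X] be a polynomial of degree at most d ≥ 1, let A ≤ B be integers with D = B − A, let N ≥ d+1, and let x_1, …, x_N be distinct integers in [A, B]. Then for every finite place v of L one has log max{1, |F|_v} ≤ log|1/D!|_v + (1/(N−d)) · Σ_{i=1}^N log max{1, |F(x_i)|_v}. -/

import Mathlib

open NumberField Polynomial IsDedekindDomain Nat
open scoped Classical

/-- The integer-valued `𝔭`-adic valuation on a number field `L`, normalized so that a
uniformizer has valuation `1` (with the junk value `0` at `x = 0`). -/
noncomputable def intValOn {L : Type*} [Field L] [NumberField L]
    (v : HeightOneSpectrum (𝓞 L)) (x : L) : ℤ :=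
  if h : x = 0 then 0
  else -Multiplicative.toAdd (WithZero.unzero ((v.valuation L).ne_zero_iff.mpr h))

/-- The normalized `𝔭`-adic absolute value `‖x‖_𝔭 = (N𝔭)^{-v_𝔭(x)}`, i.e. the `d_v`-th power
`|x|_v^{d_v}` of the absolute value `|·|_v` normalized by `|p|_v = 1/p`
(where `d_v = [L_v : ℚ_p]` is the local degree); thus for every `x ∈ L`,
`log (finAbs v x) = d_v · log |x|_v`. -/
noncomputable def finAbs {L : Type*} [Field L] [NumberField L]
    (v : HeightOneSpectrum (𝓞 L)) (x : L) : ℝ :=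
  if x = 0 then 0 else (Ideal.absNorm v.asIdeal : ℝ) ^ (-(intValOn v x))

/-- `|P|_v = max_i |a_i|_v` for `P = Σ_i a_i X^i` and `v` an absolute value on `L`. -/
noncomputable def polyNorm {L : Type*} [Field L] (v : L → ℝ) (P : L[X]) : ℝ :=
  ⨆ i, v (P.coeff i)

/-- The absolute logarithmic Weil height `h(x) = Σ_v (d_v/d_L) log max{1, |x|_v}` of `x ∈ L`:
the finite-place part is written using `finAbs` (recall `log (finAbs v x) = d_v log |x|_v`),
and for an infinite place `v`, `d_v` is `InfinitePlace.mult v`. -/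
noncomputable def elemHeight {L : Type*} [Field L] [NumberField L] (x : L) : ℝ :=
  (1 / (Module.finrank ℚ L : ℝ)) *
    ((∑ᶠ v : HeightOneSpectrum (𝓞 L), Real.log (max 1 (finAbs v x))) +
      ∑ v : InfinitePlace L, (v.mult : ℝ) * Real.log (max 1 (v x)))

/-- The height `h(P) = Σ_v (d_v/d_L) log max{1, |P|_v}` of a polynomial `P ∈ L[X]`. -/
noncomputable def polyHeight {L : Type*} [Field L] [NumberField L] (P : L[X]) : ℝ :=
  (1 / (Module.finrank ℚ L : ℝ)) *
    ((∑ᶠ v : HeightOneSpectrum (𝓞 L), Real.log (max 1 (polyNorm (finAbs v) P))) +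
      ∑ v : InfinitePlace L, (v.mult : ℝ) * Real.log (max 1 (polyNorm (⇑v) P)))

/-- The projective height `Σ_v (d_v/d_L) log max_c |c|_v` of the coefficient tuple of a pair of
polynomials `(P, Q)` (not both zero); for `P, Q` coprime with `F = P/Q` this is the height
`h(F)` of the rational fraction `F`, independent of the chosen representation. -/
noncomputable def pairHeight {L : Type*} [Field L] [NumberField L] (P Q : L[X]) : ℝ :=
  (1 / (Module.finrank ℚ L : ℝ)) *
    ((∑ᶠ v : HeightOneSpectrum (𝓞 L),
        Real.log (max (polyNorm (finAbs v) P) (polyNorm (finAbs v) Q))) +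
      ∑ v : InfinitePlace L, (v.mult : ℝ) *
        Real.log (max (polyNorm (⇑v) P) (polyNorm (⇑v) Q)))

/-- `h°(x) = (1/d_L) log |N_{L/ℚ}(x)|` for a nonzero algebraic integer `x`. -/
noncomputable def normHeight {L : Type*} [Field L] [NumberField L] (x : 𝓞 L) : ℝ :=
  (1 / (Module.finrank ℚ L : ℝ)) * Real.log |(Algebra.norm ℤ x : ℝ)|

section Helpers

variable {L : Type*} [Field L] [NumberField L] (v : HeightOneSpectrum (𝓞 L))

lemma absNorm_one_le' : (1:ℝ) ≤ (Ideal.absNorm v.asIdeal : ℝ) := by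
  have h : Ideal.absNorm v.asIdeal ≠ 0 := by
    rw [Ne, Ideal.absNorm_eq_zero_iff]; exact v.ne_bot
  exact_mod_cast Nat.one_le_iff_ne_zero.mpr h

lemma absNorm_pos' : (0:ℝ) < (Ideal.absNorm v.asIdeal : ℝ) :=
  lt_of_lt_of_le zero_lt_one (absNorm_one_le' v)

lemma finAbs_zero : finAbs v (0:L) = 0 := by simp [finAbs]

lemma finAbs_eq_zpow {x : L} (hx : x ≠ 0) :
    finAbs v x = (Ideal.absNorm v.asIdeal : ℝ) ^
      (Multiplicative.toAdd (WithZero.unzero ((v.valuation L).ne_zero_iff.mpr hx))) := by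
  rw [finAbs, if_neg hx, intValOn, dif_neg hx, neg_neg]

lemma finAbs_nonneg (x : L) : 0 ≤ finAbs v x := by
  by_cases hx : x = 0
  · simp [hx, finAbs_zero]
  · rw [finAbs_eq_zpow v hx]
    exact zpow_nonneg (le_trans zero_le_one (absNorm_one_le' v)) _

lemma finAbs_pos {x : L} (hx : x ≠ 0) : 0 < finAbs v x := by
  rw [finAbs_eq_zpow v hx]
  exact zpow_pos (absNorm_pos' v) _

lemma finAbs_mul (x y : L) : finAbs v (x * y) = finAbs v x * finAbs v y := by
  by_cases hx : x = 0
  · simp [hx, finAbs_zero]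
  by_cases hy : y = 0
  · simp [hy, finAbs_zero]
  have hxy : x * y ≠ 0 := mul_ne_zero hx hy
  rw [finAbs_eq_zpow v hx, finAbs_eq_zpow v hy, finAbs_eq_zpow v hxy,
    ← zpow_add₀ (ne_of_gt (absNorm_pos' v))]
  congr 1
  have heq : WithZero.unzero ((v.valuation L).ne_zero_iff.mpr hxy) =
      WithZero.unzero ((v.valuation L).ne_zero_iff.mpr hx) *
      WithZero.unzero ((v.valuation L).ne_zero_iff.mpr hy) := by
    have hm : v.valuation L (x * y) = v.valuation L x * v.valuation L y := map_mul _ _ _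
    refine WithZero.coe_inj.mp ?_
    rw [WithZero.coe_mul, WithZero.coe_unzero, WithZero.coe_unzero, WithZero.coe_unzero, hm]
  rw [heq, toAdd_mul]

lemma finAbs_mono {x y : L} (h : v.valuation L x ≤ v.valuation L y) :
    finAbs v x ≤ finAbs v y := by
  by_cases hx : x = 0
  · rw [hx, finAbs_zero]; exact finAbs_nonneg v y
  have hy : y ≠ 0 := by
    intro hy0
    rw [hy0, map_zero, le_zero_iff] at h
    exact hx ((v.valuation L).zero_iff.mp h)
  rw [finAbs_eq_zpow v hx, finAbs_eq_zpow v hy]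
  apply zpow_le_zpow_right₀ (absNorm_one_le' v)
  have hc : (WithZero.unzero ((v.valuation L).ne_zero_iff.mpr hx) : Multiplicative ℤ) ≤
      WithZero.unzero ((v.valuation L).ne_zero_iff.mpr hy) := by
    rw [← WithZero.coe_le_coe, WithZero.coe_unzero, WithZero.coe_unzero]
    exact h
  exact hc

lemma finAbs_one : finAbs v (1:L) = 1 := by
  have h := finAbs_mul v (1:L) 1
  rw [mul_one] at h
  have hp := finAbs_pos v (one_ne_zero : (1:L) ≠ 0)
  nlinarith

lemma finAbs_inv (x : L) : finAbs v x⁻¹ = (finAbs v x)⁻¹ := by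
  by_cases hx : x = 0
  · simp [hx, finAbs_zero]
  have h : finAbs v x * finAbs v x⁻¹ = 1 := by
    rw [← finAbs_mul, mul_inv_cancel₀ hx, finAbs_one]
  exact eq_inv_of_mul_eq_one_right h

lemma finAbs_add_le (x y : L) : finAbs v (x + y) ≤ max (finAbs v x) (finAbs v y) := by
  have h := (v.valuation L).map_add x y
  rcases le_total (v.valuation L x) (v.valuation L y) with hxy | hxy
  · exact le_max_of_le_right (finAbs_mono v (le_trans h (by simp [hxy])))
  · exact le_max_of_le_left (finAbs_mono v (le_trans h (by simp [hxy])))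

lemma finAbs_int_le_one (n : ℤ) : finAbs v ((n : L)) ≤ 1 := by
  have h1 : v.valuation L ((n:L)) ≤ v.valuation L (1:L) := by
    rw [map_one]
    have h2 := v.valuation_le_one (K := L) ((n : 𝓞 L))
    simpa using h2
  have := finAbs_mono v h1
  rwa [finAbs_one] at this

lemma finAbs_le_of_dvd {a b : ℤ} (h : a ∣ b) : finAbs v ((b:L)) ≤ finAbs v ((a:L)) := by
  obtain ⟨c, rfl⟩ := h
  rw [show ((↑(a*c) : L)) = (a:L) * (c:L) by push_cast; ring, finAbs_mul]
  calc finAbs v (a:L) * finAbs v (c:L) ≤ finAbs v (a:L) * 1 :=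
        mul_le_mul_of_nonneg_left (finAbs_int_le_one v c) (finAbs_nonneg v _)
    _ = finAbs v (a:L) := mul_one _

end Helpers

section Helpers2

variable {L : Type*} [Field L] [NumberField L] (v : HeightOneSpectrum (𝓞 L))

lemma polyNorm_bddAbove (P : L[X]) :
    BddAbove (Set.range fun i => finAbs v (P.coeff i)) := by
  have hsub : Set.range (fun i => finAbs v (P.coeff i)) ⊆
      insert 0 ((P.support.image fun i => finAbs v (P.coeff i)) : Finset ℝ) := by
    rintro r ⟨i, rfl⟩
    show finAbs v (P.coeff i) ∈ _
    by_cases hi : i ∈ P.support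
    · exact Set.mem_insert_iff.mpr (Or.inr (Finset.mem_coe.mpr
        (Finset.mem_image.mpr ⟨i, hi, rfl⟩)))
    · rw [Polynomial.notMem_support_iff.mp hi, finAbs_zero]
      exact Set.mem_insert _ _
  exact (((P.support.image fun i => finAbs v (P.coeff i)).finite_toSet.insert 0).subset
    hsub).bddAbove

lemma polyNorm_coeff_le (P : L[X]) (i : ℕ) :
    finAbs v (P.coeff i) ≤ polyNorm (finAbs v) P :=
  le_ciSup (polyNorm_bddAbove v P) i

lemma polyNorm_nonneg (P : L[X]) : 0 ≤ polyNorm (finAbs v) P :=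
  le_trans (finAbs_nonneg v _) (polyNorm_coeff_le v P 0)

lemma polyNorm_le {P : L[X]} {c : ℝ} (h : ∀ i, finAbs v (P.coeff i) ≤ c) :
    polyNorm (finAbs v) P ≤ c := ciSup_le h

lemma finAbs_sum_le {ι : Type*} (s : Finset ι) (hs : s.Nonempty) (f : ι → L) :
    finAbs v (∑ i ∈ s, f i) ≤ s.sup' hs (fun i => finAbs v (f i)) := by
  induction hs using Finset.Nonempty.cons_induction with
  | singleton a => simp
  | cons a s ha hs ih =>
    rw [Finset.sum_cons, Finset.sup'_cons]
    exact (finAbs_add_le v _ _).trans (max_le_max le_rfl ih)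
    exact hs

lemma polyNorm_sum_le {ι : Type*} (s : Finset ι) (hs : s.Nonempty) (P : ι → L[X]) :
    polyNorm (finAbs v) (∑ i ∈ s, P i) ≤ s.sup' hs (fun i => polyNorm (finAbs v) (P i)) := by
  refine polyNorm_le v fun n => ?_
  rw [Polynomial.finset_sum_coeff]
  refine (finAbs_sum_le v s hs _).trans ?_
  exact Finset.sup'_le _ _ fun i hi => (polyNorm_coeff_le v (P i) n).trans
    (Finset.le_sup' (fun i => polyNorm (finAbs v) (P i)) hi)

lemma polyNorm_C_mul_le (c : L) (Q : L[X]) :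
    polyNorm (finAbs v) (Polynomial.C c * Q) ≤ finAbs v c * polyNorm (finAbs v) Q := by
  refine polyNorm_le v fun i => ?_
  rw [Polynomial.coeff_C_mul, finAbs_mul]
  exact mul_le_mul_of_nonneg_left (polyNorm_coeff_le v Q i) (finAbs_nonneg v c)

lemma polyNorm_int_prod_le_one {ι : Type*} (s : Finset ι) (f : ι → ℤ) :
    polyNorm (finAbs v) (∏ k ∈ s, (Polynomial.X - Polynomial.C ((f k : ℤ) : L))) ≤ 1 := by
  have hmap : (∏ k ∈ s, (Polynomial.X - Polynomial.C ((f k : ℤ) : L))) =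
      Polynomial.map (Int.castRingHom L) (∏ k ∈ s, (Polynomial.X - Polynomial.C (f k))) := by
    rw [Polynomial.map_prod]
    simp [Polynomial.map_sub]
  rw [hmap]
  refine polyNorm_le v fun i => ?_
  rw [Polynomial.coeff_map]
  exact finAbs_int_le_one v _

-- the product over Icc 1 a in ℤ is a!
lemma prod_Icc_int_factorial (a : ℕ) :
    (∏ t ∈ Finset.Icc (1:ℤ) (a:ℤ), t) = (a ! : ℤ) := by
  induction a with
  | zero => simp
  | succ n ih =>
    have hins : Finset.Icc (1:ℤ) ((n+1 : ℕ):ℤ) = insert ((n:ℤ)+1) (Finset.Icc (1:ℤ) (n:ℤ)) := by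
      ext t
      simp only [Finset.mem_Icc, Finset.mem_insert]
      push_cast
      omega
    rw [hins, Finset.prod_insert (by simp), ih]
    push_cast [Nat.factorial_succ]
    ring

lemma prod_dvd_factorial_of_subset_Icc (T : Finset ℤ) (a : ℕ)
    (hT : T ⊆ Finset.Icc (1:ℤ) (a:ℤ)) : (∏ t ∈ T, t) ∣ (a ! : ℤ) := by
  rw [← prod_Icc_int_factorial a]
  exact Finset.prod_dvd_prod_of_subset _ _ _ hT

lemma prod_sub_dvd_factorial (A B : ℤ) (D : ℕ) (hD : (D : ℤ) = B - A)
    {N : ℕ} (x : Fin N → ℤ) (hinj : Function.Injective x) (hx : ∀ i, x i ∈ Set.Icc A B)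
    (S : Finset (Fin N)) (j : Fin N) :
    (∏ k ∈ S.erase j, (x j - x k)) ∣ (D ! : ℤ) := by
  classical
  set a : ℕ := (x j - A).toNat with ha'
  set b : ℕ := (B - x j).toNat with hb'
  have hxj := hx j
  rw [Set.mem_Icc] at hxj
  have ha : (a : ℤ) = x j - A := Int.toNat_of_nonneg (by omega)
  have hb : (b : ℤ) = B - x j := Int.toNat_of_nonneg (by omega)
  have hab : a + b = D := by omega
  set T := S.erase j with hT
  have hsplit := Finset.prod_filter_mul_prod_filter_not T (fun k => x k < x j)
      (fun k => x j - x k)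
  -- positive part
  have hpos : (∏ k ∈ T.filter (fun k => x k < x j), (x j - x k)) ∣ (a ! : ℤ) := by
    have hinj' : ∀ k ∈ T.filter (fun k => x k < x j), ∀ l ∈ T.filter (fun k => x k < x j),
        x j - x k = x j - x l → k = l := by
      intro k _ l _ h
      exact hinj (by omega)
    have himg : (∏ t ∈ (T.filter (fun k => x k < x j)).image (fun k => x j - x k), t)
        = ∏ k ∈ T.filter (fun k => x k < x j), (x j - x k) := Finset.prod_image hinj'
    rw [← himg]
    refine prod_dvd_factorial_of_subset_Icc _ a ?_
    intro t ht
    rw [Finset.mem_image] at ht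
    obtain ⟨k, hk, rfl⟩ := ht
    rw [Finset.mem_filter] at hk
    have := (Set.mem_Icc.mp (hx k)).1
    rw [Finset.mem_Icc]
    omega
  -- negative part
  have hneg : (∏ k ∈ T.filter (fun k => ¬ x k < x j), (x j - x k)) ∣ (b ! : ℤ) := by
    have key : (∏ k ∈ T.filter (fun k => ¬ x k < x j), (x k - x j)) ∣ (b ! : ℤ) := by
      have hinj' : ∀ k ∈ T.filter (fun k => ¬ x k < x j), ∀ l ∈ T.filter (fun k => ¬ x k < x j),
          x k - x j = x l - x j → k = l := by
        intro k _ l _ h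
        exact hinj (by omega)
      have himg : (∏ t ∈ (T.filter (fun k => ¬ x k < x j)).image (fun k => x k - x j), t)
          = ∏ k ∈ T.filter (fun k => ¬ x k < x j), (x k - x j) := Finset.prod_image hinj'
      rw [← himg]
      refine prod_dvd_factorial_of_subset_Icc _ b ?_
      intro t ht
      rw [Finset.mem_image] at ht
      obtain ⟨k, hk, rfl⟩ := ht
      rw [Finset.mem_filter] at hk
      have hkj : k ≠ j := Finset.ne_of_mem_erase (hT ▸ hk.1)
      have hne : x k ≠ x j := fun h => hkj (hinj h)
      have := (Set.mem_Icc.mp (hx k)).2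
      rw [Finset.mem_Icc]
      omega
    have hsign : (∏ k ∈ T.filter (fun k => ¬ x k < x j), (x j - x k)) =
        (-1) ^ (T.filter (fun k => ¬ x k < x j)).card *
          (∏ k ∈ T.filter (fun k => ¬ x k < x j), (x k - x j)) := by
      rw [← Finset.prod_const, ← Finset.prod_mul_distrib]
      exact Finset.prod_congr rfl (fun k _ => by ring)
    rw [hsign]
    obtain ⟨c, hc⟩ := key
    refine ⟨(-1) ^ (T.filter (fun k => ¬ x k < x j)).card * c, ?_⟩
    rw [hc]
    have : ((-1:ℤ)) ^ (T.filter (fun k => ¬ x k < x j)).card *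
        (-1:ℤ) ^ (T.filter (fun k => ¬ x k < x j)).card = 1 := by
      rw [← pow_add]
      exact Even.neg_one_pow ⟨_, rfl⟩
    nlinarith [this]
  have hcomb : (∏ k ∈ T, (x j - x k)) ∣ ((a ! : ℤ) * (b ! : ℤ)) := by
    rw [← hsplit]
    exact mul_dvd_mul hpos hneg
  refine hcomb.trans ?_
  have := Nat.factorial_mul_factorial_dvd_factorial_add a b
  rw [hab] at this
  exact_mod_cast this

end Helpers2
section Helpers3

variable {L : Type*} [Field L] [NumberField L] (v : HeightOneSpectrum (𝓞 L))

lemma basis_norm_le (D : ℕ) (A B : ℤ) (hD : (D : ℤ) = B - A)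
    {N : ℕ} (x : Fin N → ℤ) (hinj : Function.Injective x) (hx : ∀ i, x i ∈ Set.Icc A B)
    (S : Finset (Fin N)) (j : Fin N) :
    polyNorm (finAbs v) (Lagrange.basis S (fun i => ((x i : ℤ) : L)) j)
      ≤ finAbs v ((D ! : L)⁻¹) := by
  classical
  set xv : Fin N → L := fun i => ((x i : ℤ) : L) with hxv
  have hP : Lagrange.basis S xv j =
      Polynomial.C ((∏ k ∈ S.erase j, (xv j - xv k))⁻¹) *
        ∏ k ∈ S.erase j, (Polynomial.X - Polynomial.C (xv k)) := by
    rw [Lagrange.basis]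
    simp only [Lagrange.basisDivisor]
    rw [Finset.prod_mul_distrib, ← map_prod, Finset.prod_inv_distrib]
  rw [hP]
  refine (polyNorm_C_mul_le v _ _).trans ?_
  have hb1 : polyNorm (finAbs v) (∏ k ∈ S.erase j, (Polynomial.X - Polynomial.C (xv k))) ≤ 1 :=
    polyNorm_int_prod_le_one v (S.erase j) x
  have hprod_cast : (∏ k ∈ S.erase j, (xv j - xv k)) =
      ((∏ k ∈ S.erase j, (x j - x k) : ℤ) : L) := by push_cast; rfl
  have hdvd : (∏ k ∈ S.erase j, (x j - x k)) ∣ (D ! : ℤ) :=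
    prod_sub_dvd_factorial A B D hD x hinj hx S j
  have hDLne : (D ! : L) ≠ 0 := Nat.cast_ne_zero.mpr (Nat.factorial_ne_zero D)
  have hDZne : (((D ! : ℕ) : ℤ) : L) ≠ 0 := by exact_mod_cast hDLne
  have h1 : finAbs v (((D ! : ℕ) : ℤ) : L) ≤ finAbs v (((∏ k ∈ S.erase j, (x j - x k)) : ℤ) : L) :=
    finAbs_le_of_dvd v hdvd
  have hc : finAbs v ((∏ k ∈ S.erase j, (xv j - xv k))⁻¹) ≤ finAbs v ((D ! : L)⁻¹) := by
    rw [finAbs_inv, finAbs_inv, hprod_cast,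
      show ((D ! : ℕ) : L) = (((D ! : ℕ) : ℤ) : L) by push_cast; rfl]
    exact inv_anti₀ (finAbs_pos v hDZne) h1
  refine le_trans (mul_le_mul_of_nonneg_left hb1 (finAbs_nonneg v _)) ?_
  rw [mul_one]
  exact hc

end Helpers3


/-- Let `F ∈ L[X]` of degree at most `d ≥ 1`, `N ≥ d+1`, and let
`x 0, …, x (N-1)` be distinct integers in `[A, B]`, `D = B − A`. Then for every finite place
`v` of `L`, `log max{1, |F|_v} ≤ log |1/D!|_v + (1/(N−d)) Σ_i log max{1, |F(x_i)|_v}`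
(stated, equivalently, after multiplying both sides of the inequality by the local degree
`d_v`, i.e. using the normalization `finAbs`). -/
theorem stmt_4 {L : Type*} [Field L] [NumberField L]
    (d : ℕ) (hd : 1 ≤ d) (F : L[X]) (hdeg : F.natDegree ≤ d)
    (A B : ℤ) (hAB : A ≤ B) (D : ℕ) (hD : (D : ℤ) = B - A)
    (N : ℕ) (hN : d + 1 ≤ N)
    (x : Fin N → ℤ) (hinj : Function.Injective x) (hx : ∀ i, x i ∈ Set.Icc A B)
    (v : HeightOneSpectrum (𝓞 L)) :
    Real.log (max 1 (polyNorm (finAbs v) F)) ≤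
      Real.log (finAbs v ((D ! : L)⁻¹))
      + (1 / ((N : ℝ) - (d : ℝ))) *
          ∑ i, Real.log (max 1 (finAbs v (F.eval ((x i : ℤ) : L)))) := by
  classical
  have hdN : d < N := hN
  set g : Fin N → ℝ := fun i => finAbs v (F.eval ((x i : ℤ) : L)) with hg
  set σ := Tuple.sort g with hσ
  have hmono : Monotone (g ∘ σ) := Tuple.monotone_sort g
  set jd : Fin N := ⟨d, hdN⟩ with hjd
  set m : ℝ := g (σ jd) with hm
  set t : ℝ := finAbs v ((D ! : L)⁻¹) with ht
  have hDLne : (D ! : L) ≠ 0 := Nat.cast_ne_zero.mpr (Nat.factorial_ne_zero D)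
  have htpos : 0 < t := finAbs_pos v (inv_ne_zero hDLne)
  have ht1 : 1 ≤ t := by
    rw [ht, finAbs_inv, show ((D ! : ℕ) : L) = (((D ! : ℕ) : ℤ) : L) by push_cast; rfl]
    have hle := finAbs_int_le_one v ((D ! : ℕ) : ℤ)
    have hpos : (0:ℝ) < finAbs v ((((D ! : ℕ) : ℤ)) : L) :=
      finAbs_pos v (by exact_mod_cast hDLne)
    have := inv_anti₀ hpos hle
    simpa using this
  set S : Finset (Fin N) := Finset.image σ (Finset.Iic jd) with hS
  have hcardS : S.card = d + 1 := by
    rw [hS, Finset.card_image_of_injective _ σ.injective, Fin.card_Iic]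
  have hSne : S.Nonempty := Finset.card_pos.mp (by rw [hcardS]; omega)
  set xv : Fin N → L := fun i => ((x i : ℤ) : L) with hxv
  have hInj : Set.InjOn xv S := by
    intro p _ q _ h
    simp only [hxv] at h
    exact hinj (Int.cast_injective h)
  have hdeglt : F.degree < (S.card : WithBot ℕ) := by
    rw [hcardS]
    calc F.degree ≤ (F.natDegree : WithBot ℕ) := Polynomial.degree_le_natDegree
      _ < ((d + 1 : ℕ) : WithBot ℕ) := by
          exact_mod_cast Nat.lt_succ_of_le hdeg
  have hFeq : F = ∑ i ∈ S, Polynomial.C (F.eval (xv i)) * Lagrange.basis S xv i := by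
    conv_lhs => rw [Lagrange.eq_interpolate hInj hdeglt]
    rw [Lagrange.interpolate_apply]
  have hmnonneg : 0 ≤ m := finAbs_nonneg v _
  have hFle : polyNorm (finAbs v) F ≤ m * t := by
    calc polyNorm (finAbs v) F
        = polyNorm (finAbs v) (∑ i ∈ S, Polynomial.C (F.eval (xv i)) * Lagrange.basis S xv i) :=
          by rw [← hFeq]
      _ ≤ S.sup' hSne (fun i => polyNorm (finAbs v)
            (Polynomial.C (F.eval (xv i)) * Lagrange.basis S xv i)) :=
          polyNorm_sum_le v S hSne _
      _ ≤ m * t := by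
          refine Finset.sup'_le _ _ fun i hi => ?_
          refine (polyNorm_C_mul_le v _ _).trans ?_
          have h1 : finAbs v (F.eval (xv i)) ≤ m := by
            rw [hS] at hi
            obtain ⟨k, hk, rfl⟩ := Finset.mem_image.mp hi
            exact hmono (Finset.mem_Iic.mp hk)
          have h2 : polyNorm (finAbs v) (Lagrange.basis S xv i) ≤ t :=
            basis_norm_le v D A B hD x hinj hx S i
          exact mul_le_mul h1 h2 (polyNorm_nonneg v _) hmnonneg
  have hNd : (0:ℝ) < (N:ℝ) - d := by
    have : (d:ℝ) < N := by exact_mod_cast hdN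
    linarith
  have hsum : ((N:ℝ) - d) * Real.log (max 1 m) ≤ ∑ i, Real.log (max 1 (g i)) := by
    have hperm : ∑ i, Real.log (max 1 (g i)) = ∑ k, Real.log (max 1 (g (σ k))) :=
      (Equiv.sum_comp σ fun i => Real.log (max 1 (g i))).symm
    rw [hperm]
    have hsub : ∑ k ∈ Finset.Ici jd, Real.log (max 1 (g (σ k))) ≤
        ∑ k, Real.log (max 1 (g (σ k))) := by
      apply Finset.sum_le_sum_of_subset_of_nonneg (Finset.subset_univ _)
      intro i _ _
      exact Real.log_nonneg (le_max_left _ _)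
    refine le_trans ?_ hsub
    have hlb : ∀ k ∈ Finset.Ici jd, Real.log (max 1 m) ≤ Real.log (max 1 (g (σ k))) := by
      intro k hk
      have hmk : m ≤ g (σ k) := hmono (Finset.mem_Ici.mp hk)
      exact Real.log_le_log (lt_of_lt_of_le one_pos (le_max_left _ _))
        (max_le_max le_rfl hmk)
    calc ((N:ℝ) - d) * Real.log (max 1 m)
        = ((Finset.Ici jd).card : ℝ) * Real.log (max 1 m) := by
          rw [Fin.card_Ici]
          congr 1
          have : (jd : ℕ) = d := rfl
          rw [this, Nat.cast_sub (le_of_lt hdN)]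
      _ = ∑ _k ∈ Finset.Ici jd, Real.log (max 1 m) := by
          rw [Finset.sum_const, nsmul_eq_mul]
      _ ≤ ∑ k ∈ Finset.Ici jd, Real.log (max 1 (g (σ k))) := Finset.sum_le_sum hlb
  have hstepA : Real.log (max 1 (polyNorm (finAbs v) F)) ≤ Real.log t + Real.log (max 1 m) := by
    rcases le_or_gt (polyNorm (finAbs v) F) 1 with hF1 | hF1
    · rw [max_eq_left hF1, Real.log_one]
      have h1 := Real.log_nonneg ht1
      have h2 := Real.log_nonneg (le_max_left 1 m)
      linarith
    · rw [max_eq_right (le_of_lt hF1)]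
      have hle : polyNorm (finAbs v) F ≤ max 1 m * t :=
        hFle.trans (mul_le_mul_of_nonneg_right (le_max_right 1 m) (le_of_lt htpos))
      have hlog := Real.log_le_log (lt_trans one_pos hF1) hle
      rwa [Real.log_mul (ne_of_gt (lt_of_lt_of_le one_pos (le_max_left 1 m)))
        (ne_of_gt htpos), add_comm] at hlog
  have hfin : Real.log (max 1 m) ≤ (1 / ((N:ℝ) - d)) * ∑ i, Real.log (max 1 (g i)) := by
    calc Real.log (max 1 m)
        = (1/((N:ℝ)-d)) * (((N:ℝ)-d) * Real.log (max 1 m)) := by field_simp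
      _ ≤ (1/((N:ℝ)-d)) * ∑ i, Real.log (max 1 (g i)) :=
          mul_le_mul_of_nonneg_left hsum (by positivity)
  have hgoal : (∑ i, Real.log (max 1 (finAbs v (F.eval ((x i : ℤ) : L)))))
      = ∑ i, Real.log (max 1 (g i)) := rfl
  rw [hgoal]
  linarith [hstepA, hfin]
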